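/- Let O be a ring admitting a constrained filtration, and let O′ be a ring containing O as a subring such that O is contained in the center of O′ and O′ is free and finitely generated as an O-module. Then O′ admits a constrained filtration. -/

import Mathlib

/-- A constrained filtration of a ring `O`: an increasing chain `(Oₙ)` of finite
nonempty subsets such that (CF0) `⋃ₙ Oₙ = O`; (CF1) there is `k` with
`Oₙ + Oₙ ⊆ O_{n+k}` for all `n`; (CF2) for every `a ∈ O` there is `k` with
`a·Oₙ ⊆ O_{n+k}` for all `n`; (CF3) for every `ε > 0` there is `C_ε > 0` with
`|O_{n+1}| ≤ C_ε·|Oₙ|^(1+ε)` for all `n`. -/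
def IsConstrainedFiltration (O : Type*) [Ring O] (F : ℕ → Set O) : Prop :=
  (∀ n, (F n).Finite ∧ (F n).Nonempty) ∧
  (∀ n, F n ⊆ F (n + 1)) ∧
  (∀ x : O, ∃ n, x ∈ F n) ∧
  (∃ k : ℕ, ∀ n, ∀ x ∈ F n, ∀ y ∈ F n, x + y ∈ F (n + k)) ∧
  (∀ a : O, ∃ k : ℕ, ∀ n, ∀ x ∈ F n, a * x ∈ F (n + k)) ∧
  (∀ ε : ℝ, 0 < ε → ∃ C : ℝ, 0 < C ∧
    ∀ n, ((F (n + 1)).ncard : ℝ) ≤ C * ((F n).ncard : ℝ) ^ ((1 : ℝ) + ε))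

/-- A ring is constrainedly filtered if it admits a constrained filtration. -/
def ConstrainedlyFiltered (O : Type*) [Ring O] : Prop :=
  ∃ F : ℕ → Set O, IsConstrainedFiltration O F

/-- Monotonicity of a filtration. -/
lemma filt_mono {O : Type*} (F : ℕ → Set O) (h : ∀ n, F n ⊆ F (n + 1)) :
    ∀ {m n : ℕ}, m ≤ n → F m ⊆ F n := by
  intro m n hmn
  induction hmn with
  | refl => exact subset_rfl
  | step _ ih => exact fun x hx => h _ (ih hx)

/-- A sum of elements of `F m` lies in `F (m + card * k)`. -/
lemma filt_sum {O : Type*} [Ring O] (F : ℕ → Set O)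
    (hmono : ∀ n, F n ⊆ F (n + 1)) (k : ℕ)
    (hk : ∀ n, ∀ x ∈ F n, ∀ y ∈ F n, x + y ∈ F (n + k))
    {ι : Type*} (s : Finset ι) :
    ∀ (f : ι → O) (m : ℕ) (x₀ : O), x₀ ∈ F m → (∀ j ∈ s, f j ∈ F m) →
      x₀ + ∑ j ∈ s, f j ∈ F (m + s.card * k) := by
  classical
  induction s using Finset.cons_induction with
  | empty => intro f m x₀ hx₀ _; simpa using hx₀
  | cons a s ha ih =>
      intro f m x₀ hx₀ hf
      rw [Finset.sum_cons, ← add_assoc]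
      have h1 : x₀ + f a ∈ F (m + k) := hk m x₀ hx₀ (f a) (hf a (Finset.mem_cons_self a s))
      have h2 : ∀ j ∈ s, f j ∈ F (m + k) :=
        fun j hj => filt_mono F hmono (Nat.le_add_right m k) (hf j (Finset.mem_cons_of_mem hj))
      have := ih f (m + k) (x₀ + f a) h1 h2
      have hcard : m + k + s.card * k = m + (Finset.cons a s ha).card * k := by
        rw [Finset.card_cons]; ring
      rwa [hcard] at this

/-- if `O` admits a constrained filtration and `O'` is a ring
containing `O` as a central subring (here: an `O`-algebra with injective structure
map, so that `O` embeds centrally) which is free and finitely generated as an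
`O`-module, then `O'` admits a constrained filtration. -/
theorem statement11 (O O' : Type*) [CommRing O] [Ring O'] [Algebra O O']
    (hinj : Function.Injective (algebraMap O O'))
    [Module.Free O O'] [Module.Finite O O']
    (h : ConstrainedlyFiltered O) :
    ConstrainedlyFiltered O' := by
  classical
  rcases subsingleton_or_nontrivial O' with hs | hnt
  · -- trivial ring
    refine ⟨fun _ => Set.univ, fun n => ⟨Set.finite_univ, ⟨0, trivial⟩⟩,
      fun n => subset_rfl, fun x => ⟨0, trivial⟩, ⟨0, fun _ _ _ _ _ => trivial⟩,
      fun a => ⟨0, fun _ _ _ => trivial⟩, fun ε hε => ⟨1, one_pos, fun n => ?_⟩⟩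
    have hcard : (Set.univ : Set O').ncard = 1 := by
      rw [Set.ncard_univ, Nat.card_eq_one_iff_unique]
      exact ⟨⟨fun a b => Subsingleton.elim a b⟩, ⟨0⟩⟩
    rw [hcard]
    norm_num [Real.one_rpow]
  · have : Nontrivial O := (algebraMap O O').domain_nontrivial
    obtain ⟨F, hFfin, hFmono, hFcover, ⟨ka, hka⟩, hFmul, hFcard⟩ := h
    set ι := Module.Free.ChooseBasisIndex O O' with hι
    set b : Module.Basis ι O O' := Module.Free.chooseBasis O O' with hb
    set d := Fintype.card ι with hd
    set T : (ι → O) → O' := fun c => ∑ i, c i • b i with hT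
    have hTc : ∀ c : ι → O, ⇑(b.repr (T c)) = c := fun c => b.repr_sum_self c
    have hTinj : Function.Injective T := by
      intro c c' hcc
      rw [← hTc c, ← hTc c', hcc]
    set G : ℕ → Set O' := fun n => T '' (Set.univ.pi fun _ : ι => F n) with hG
    have hmem : ∀ n (x : O'), x ∈ G n ↔ ∀ i, b.repr x i ∈ F n := by
      intro n x
      constructor
      · rintro ⟨c, hc, rfl⟩ i
        rw [show b.repr (T c) i = c i from congrFun (hTc c) i]
        exact hc i (Set.mem_univ i)
      · intro hx
        exact ⟨fun i => b.repr x i, fun i _ => hx i, by simp [hT, b.sum_repr x]⟩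
    have hGfin : ∀ n, (G n).Finite := by
      intro n
      exact ((Set.Finite.pi fun _ => (hFfin n).1)).image T
    have hGne : ∀ n, (G n).Nonempty := by
      intro n
      obtain ⟨c, hc⟩ := (hFfin n).2
      exact ⟨T (fun _ => c), ⟨fun _ => c, fun i _ => hc, rfl⟩⟩
    have hGmono : ∀ n, G n ⊆ G (n + 1) := by
      intro n
      exact Set.image_mono (f := T) (Set.pi_mono fun i _ => hFmono n)
    refine ⟨G, fun n => ⟨hGfin n, hGne n⟩, hGmono, ?_, ?_, ?_, ?_⟩
    · -- cover
      intro x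
      have hex : ∀ i : ι, ∃ n, b.repr x i ∈ F n := fun i => hFcover (b.repr x i)
      choose g hg using hex
      refine ⟨Finset.univ.sup g, (hmem _ x).mpr fun i => ?_⟩
      exact filt_mono F hFmono (Finset.le_sup (Finset.mem_univ i)) (hg i)
    · -- addition
      refine ⟨ka, fun n x hx y hy => ?_⟩
      rw [hmem] at hx hy ⊢
      intro i
      rw [map_add, Finsupp.add_apply]
      exact hka n _ (hx i) _ (hy i)
    · -- multiplication
      intro a
      choose km hkm using hFmul
      set K : ℕ := Finset.univ.sup (fun p : ι × ι => km (b.repr (a * b p.1) p.2)) with hK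
      refine ⟨K + d * ka, fun n x hx => ?_⟩
      rw [hmem]
      intro i
      -- a * x = ∑ j, b.repr x j • (a * b j)
      have hax : a * x = ∑ j, b.repr x j • (a * b j) := by
        conv_lhs => rw [← b.sum_repr x]
        rw [Finset.mul_sum]
        exact Finset.sum_congr rfl fun j _ => mul_smul_comm _ _ _
      have hrepr : b.repr (a * x) i = ∑ j, b.repr (a * b j) i * b.repr x j := by
        rw [hax, map_sum]
        simp only [map_smul, Finsupp.coe_finset_sum, Finset.sum_apply, Finsupp.coe_smul,
          Pi.smul_apply, smul_eq_mul]
        exact Finset.sum_congr rfl fun j _ => mul_comm _ _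
      rw [hrepr]
      -- each term lies in F (n + K)
      have hterm : ∀ j : ι, b.repr (a * b j) i * b.repr x j ∈ F (n + K) := by
        intro j
        have h1 : b.repr (a * b j) i * b.repr x j ∈ F (n + km (b.repr (a * b j) i)) :=
          hkm (b.repr (a * b j) i) n _ ((hmem n x).mp hx j)
        refine filt_mono F hFmono ?_ h1
        have : km (b.repr (a * b j) i) ≤ K :=
          Finset.le_sup (f := fun p : ι × ι => km (b.repr (a * b p.1) p.2))
            (Finset.mem_univ (j, i))
        omega
      -- sum up
      haveI : Nonempty ι := ⟨i⟩
      obtain ⟨j₀⟩ := ‹Nonempty ι›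
      have hsum : (∑ j, b.repr (a * b j) i * b.repr x j) =
          b.repr (a * b j₀) i * b.repr x j₀ +
          ∑ j ∈ Finset.univ.erase j₀, b.repr (a * b j) i * b.repr x j :=
        (Finset.add_sum_erase _ _ (Finset.mem_univ j₀)).symm
      rw [hsum]
      have := filt_sum F hFmono ka hka (Finset.univ.erase j₀)
        (fun j => b.repr (a * b j) i * b.repr x j) (n + K) _ (hterm j₀) (fun j _ => hterm j)
      refine filt_mono F hFmono ?_ this
      have hcard : (Finset.univ.erase j₀).card ≤ d := by
        rw [hd]
        exact le_trans (Finset.card_erase_le) (le_of_eq (Finset.card_univ))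
      have : (Finset.univ.erase j₀).card * ka ≤ d * ka := Nat.mul_le_mul_right _ hcard
      omega
    · -- growth
      intro ε hε
      obtain ⟨C, hC, hCb⟩ := hFcard ε hε
      refine ⟨max 1 (C ^ d), lt_of_lt_of_le one_pos (le_max_left _ _), fun n => ?_⟩
      have hncard : ∀ m, (G m).ncard = (F m).ncard ^ d := by
        intro m
        rw [hG]
        rw [Set.ncard_image_of_injective _ hTinj]
        have : (Set.univ.pi fun _ : ι => F m).ncard =
            Nat.card (Set.univ.pi fun _ : ι => F m) := rfl
        rw [this, Nat.card_congr (Equiv.Set.univPi fun _ : ι => F m), Nat.card_pi,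
          Finset.prod_const, Finset.card_univ, Nat.card_coe_set_eq]
      have hpos : (1 : ℝ) ≤ ((F n).ncard : ℝ) := by
        have := (Set.ncard_pos (hFfin n).1).mpr (hFfin n).2
        exact_mod_cast this
      have hstep := hCb n
      have hGn : ((G n).ncard : ℝ) = ((F n).ncard : ℝ) ^ d := by
        rw [hncard n]; push_cast; ring
      have hGn1 : ((G (n + 1)).ncard : ℝ) = ((F (n + 1)).ncard : ℝ) ^ d := by
        rw [hncard (n + 1)]; push_cast; ring
      rw [hGn, hGn1]
      set y : ℝ := ((F n).ncard : ℝ) with hy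
      have hy0 : (0 : ℝ) ≤ y := by linarith
      calc ((F (n + 1)).ncard : ℝ) ^ d
          ≤ (C * y ^ ((1 : ℝ) + ε)) ^ d := by
            apply pow_le_pow_left₀ (by positivity) hstep
        _ = C ^ d * (y ^ ((1 : ℝ) + ε)) ^ d := mul_pow _ _ d
        _ = C ^ d * (y ^ d) ^ ((1 : ℝ) + ε) := by
            rw [← Real.rpow_natCast (y ^ ((1 : ℝ) + ε)) d, ← Real.rpow_mul hy0,
              mul_comm ((1 : ℝ) + ε), Real.rpow_mul hy0, Real.rpow_natCast]
        _ ≤ max 1 (C ^ d) * (y ^ d) ^ ((1 : ℝ) + ε) :=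
            mul_le_mul_of_nonneg_right (le_max_right _ _)
              (Real.rpow_nonneg (by positivity) _)
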